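/- For a hackenbush string: (a) if all counters are blue, the value is a positive integer n (n = length), Red has no move, and Blue can remove the top counter to decrease the value by 1; (b) symmetrically for all-red strings Red can increase the value by 1; (c) if the string contains both colors, its value equals a/2^k with a odd and k ≥ 1, removing Blue's topmost blue counter (and everything above) decreases the value by exactly 1/2^k, and removing Red's topmost red counter (and everything above) increases the value by exactly 1/2^k. -/

import Mathlib

def bvalAux : Bool → Bool → ℚ → List Bool → ℚ
  | _, _, _, [] => 0
  | changed, prev, w, b :: t =>
      let changed' := changed || (b != prev)
      let w' := if changed' then w / 2 else 1
      (if b then w' else -w') + bvalAux changed' b w' t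

/-- Berlekamp's value of a hackenbush string (`true` = blue, `false` = red,
listed bottom to top). -/
def bval : List Bool → ℚ
  | [] => 0
  | b :: t => (if b then 1 else -1) + bvalAux false b 1 t

def g : List Bool → ℚ
  | [] => 0
  | b :: t => (if b then (1:ℚ)/2 else -(1:ℚ)/2) + g t / 2

lemma bvalAux_true (t : List Bool) : ∀ p w, bvalAux true p w t = w * g t := by
  induction t with
  | nil => intro p w; simp [bvalAux, g]
  | cons b t ih =>
    intro p w
    cases b <;> simp [bvalAux, g, ih] <;> ring

lemma g_append (u v : List Bool) : g (u ++ v) = g u + g v / 2 ^ u.length := by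
  induction u with
  | nil => simp [g]
  | cons b u ih =>
    cases b <;> simp [g, ih] <;> ring

lemma g_replicate_false (r : ℕ) : g (List.replicate r false) = 1 / 2 ^ r - 1 := by
  induction r with
  | zero => simp [g]
  | succ n ih => rw [List.replicate_succ]; simp [g, ih]; ring

lemma g_replicate_true (r : ℕ) : g (List.replicate r true) = 1 - 1 / 2 ^ r := by
  induction r with
  | zero => simp [g]
  | succ n ih => rw [List.replicate_succ]; simp [g, ih]; ring

lemma g_true_repl (r : ℕ) : g (true :: List.replicate r false) = 1 / 2 ^ (r + 1) := by
  simp [g, g_replicate_false]; ring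

lemma g_false_repl (r : ℕ) : g (false :: List.replicate r true) = -(1 / 2 ^ (r + 1)) := by
  simp [g, g_replicate_true]; ring

lemma g_odd (s : List Bool) (h : s ≠ []) : ∃ a : ℤ, Odd a ∧ g s = a / 2 ^ s.length := by
  induction s with
  | nil => exact absurd rfl h
  | cons b t ih =>
    rcases eq_or_ne t [] with rfl | ht
    · cases b
      · exact ⟨-1, ⟨-1, by ring⟩, by norm_num [g]⟩
      · exact ⟨1, odd_one, by norm_num [g]⟩
    · obtain ⟨a, ha, hg⟩ := ih ht
      obtain ⟨n, hn⟩ : ∃ n, t.length = n + 1 :=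
        ⟨t.length - 1, by have := List.length_pos_iff.mpr ht; omega⟩
      have h2 : (2:ℚ) ^ t.length ≠ 0 := by positivity
      cases b
      · refine ⟨-(2 ^ t.length) + a, ?_, ?_⟩
        · exact (Even.neg ⟨2 ^ n, by rw [hn, pow_succ]; ring⟩).add_odd ha
        · simp only [g, hg, List.length_cons, Bool.false_eq_true, if_false]
          push_cast
          rw [pow_succ]
          field_simp
          try ring
      · refine ⟨2 ^ t.length + a, ?_, ?_⟩
        · exact (Even.add_odd ⟨2 ^ n, by rw [hn, pow_succ]; ring⟩ ha)
        · simp only [g, hg, List.length_cons, if_true]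
          push_cast
          rw [pow_succ]
          field_simp
          try ring


lemma bvalAux_prefix (c : Bool) (s : List Bool) (hs : s = [] ∨ s.head? = some (!c)) :
    ∀ m, bvalAux false c 1 (List.replicate m c ++ s)
      = (if c then (m : ℚ) else -(m : ℚ)) + g s := by
  intro m
  induction m with
  | zero =>
    rcases hs with rfl | hh
    · cases c <;> simp [bvalAux, g]
    · obtain ⟨t, rfl⟩ : ∃ t, s = (!c) :: t := by
        cases s with
        | nil => simp at hh
        | cons x t =>
          simp only [List.head?_cons, Option.some_inj] at hh
          exact ⟨t, by rw [hh]⟩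
      cases c <;> simp [bvalAux, g, bvalAux_true] <;> ring
  | succ n ih =>
    rw [List.replicate_succ]
    cases c <;> simp [bvalAux, ih] <;> push_cast <;> ring

lemma bval_decomp (c : Bool) (s : List Bool) (m : ℕ) (hm : 1 ≤ m)
    (hs : s = [] ∨ s.head? = some (!c)) :
    bval (List.replicate m c ++ s) = (if c then (m : ℚ) else -(m : ℚ)) + g s := by
  obtain ⟨n, rfl⟩ : ∃ n, m = n + 1 := ⟨m - 1, by omega⟩
  rw [List.replicate_succ, List.cons_append, bval, bvalAux_prefix c s hs n]
  cases c <;> push_cast <;> simp <;> ring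

lemma bval_replicate (c : Bool) (n : ℕ) :
    bval (List.replicate n c) = if c then (n : ℚ) else -(n : ℚ) := by
  rcases Nat.eq_zero_or_pos n with rfl | hn
  · simp [bval]
  · have := bval_decomp c [] n hn (Or.inl rfl)
    simpa [g] using this


lemma split_lead : ∀ (t : List Bool) (c : Bool), ∃ m s, c :: t = List.replicate (m + 1) c ++ s ∧
    (s = [] ∨ s.head? = some (!c)) := by
  intro t
  induction t with
  | nil => intro c; exact ⟨0, [], by simp, Or.inl rfl⟩
  | cons b t ih =>
    intro c
    by_cases hb : b = c
    · subst hb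
      obtain ⟨m, s, he, hs⟩ := ih b
      exact ⟨m + 1, s, by rw [List.replicate_succ, List.cons_append, ← he], hs⟩
    · have hb' : b = !c := by cases b <;> cases c <;> simp_all
      exact ⟨0, b :: t, by simp, Or.inr (by simp [hb'])⟩


lemma g_cons_repl (b : Bool) (r : ℕ) :
    g (b :: List.replicate r (!b)) = (if b then 1 else -1) / 2 ^ (r + 1) := by
  cases b
  · rw [show (!false) = true from rfl, g_false_repl]; norm_num [neg_div]
  · rw [show (!true) = false from rfl, g_true_repl]; norm_num

lemma drop_eq (l : List Bool) (b : Bool) (j : ℕ) (hj : j < l.length)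
    (h1 : l.getD j (!b) = b)
    (h2 : ∀ i, j < i → i < l.length → l.getD i b = !b) :
    l.drop j = b :: List.replicate (l.length - j - 1) (!b) := by
  apply List.ext_getElem
  · simp; omega
  · intro i hi1 hi2
    rw [List.getElem_drop]
    cases i with
    | zero =>
      rw [List.getD_eq_getElem _ _ hj] at h1
      rw [List.getElem_cons_zero]
      simpa using h1
    | succ i2 =>
      have hlt : j + (i2 + 1) < l.length := by
        rw [List.length_drop] at hi1; omega
      have := h2 (j + (i2 + 1)) (by omega) hlt
      rw [List.getD_eq_getElem _ _ hlt] at this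
      rw [List.getElem_cons_succ, List.getElem_replicate]
      exact this

lemma move (c b : Bool) (m k : ℕ) (s : List Bool) (hsh : s.head? = some (!c))
    (hk : s.length = k) (j : ℕ) (hj : j < m + 1 + k)
    (hdrop : (List.replicate (m + 1) c ++ s).drop j
      = b :: List.replicate (m + 1 + k - j - 1) (!b)) :
    bval ((List.replicate (m + 1) c ++ s).take j)
      = bval (List.replicate (m + 1) c ++ s) - (if b then 1 else -1) / 2 ^ k := by
  have hsne : s ≠ [] := by rintro rfl; simp at hsh
  have hL : (List.replicate (m + 1) c ++ s).length = m + 1 + k := by simp [hk]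
  have hbv := bval_decomp c s (m + 1) (by omega) (Or.inr hsh)
  by_cases hjm : m + 1 ≤ j
  · set r := m + 1 + k - j - 1 with hr
    set d := j - (m + 1) with hd
    have e1 : (List.replicate (m + 1) c ++ s).drop ((List.replicate (m + 1) c).length + d)
        = s.drop d := List.drop_length_add_append d
    rw [List.length_replicate] at e1
    have hds : s.drop d = b :: List.replicate r (!b) := by
      rw [← e1, show m + 1 + d = j by omega, hdrop]
    have hdk : d < k := by omega
    have hsdec : s = s.take d ++ (b :: List.replicate r (!b)) := by
      conv_lhs => rw [← List.take_append_drop d s]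
      rw [hds]
    have hdlen : (s.take d).length = d := by rw [List.length_take]; omega
    have hgs : g s = g (s.take d) + (if b then 1 else -1) / 2 ^ k := by
      conv_lhs => rw [hsdec]
      rw [g_append, g_cons_repl, hdlen, div_div, ← pow_add, show r + 1 + d = k by omega]
    have e2 : (List.replicate (m + 1) c ++ s).take ((List.replicate (m + 1) c).length + d)
        = List.replicate (m + 1) c ++ s.take d := List.take_length_add_append d
    rw [List.length_replicate] at e2
    have htake : (List.replicate (m + 1) c ++ s).take j
        = List.replicate (m + 1) c ++ s.take d := by
      rw [show j = m + 1 + d by omega, e2]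
    have hcond : s.take d = [] ∨ (s.take d).head? = some (!c) := by
      cases hdz : d with
      | zero => left; simp
      | succ e =>
        right
        obtain ⟨s', rfl⟩ : ∃ s', s = (!c) :: s' := by
          cases s with
          | nil => simp at hsh
          | cons x t =>
            simp only [List.head?_cons, Option.some_inj] at hsh
            exact ⟨t, by rw [hsh]⟩
        simp
    rw [htake, bval_decomp c _ (m + 1) (by omega) hcond, hbv, hgs]
    ring
  · -- j ≤ m
    have hgetc : ∀ i (h : i < m + 1),
        (List.replicate (m + 1) c ++ s)[i]'(by rw [hL]; omega) = c := by
      intro i h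
      rw [List.getElem_append_left (by simpa using h)]
      exact List.getElem_replicate ..
    have hjL : j < (List.replicate (m + 1) c ++ s).length := by rw [hL]; omega
    have hLb : (List.replicate (m + 1) c ++ s)[j]'hjL = b := by
      have e : (List.replicate (m + 1) c ++ s)[j]? = some b := by
        rw [← List.head?_drop, hdrop, List.head?_cons]
      rw [List.getElem?_eq_getElem hjL] at e
      exact Option.some_inj.mp e
    have hcb : c = b := (hgetc j (by omega)).symm.trans hLb
    have hjm2 : j = m := by
      by_contra hne'
      have hlt : j + 1 < (List.replicate (m + 1) c ++ s).length := by rw [hL]; omega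
      have e : (List.replicate (m + 1) c ++ s)[j + 1]? = some (!b) := by
        rw [← List.getElem?_drop, hdrop]
        rw [List.getElem?_cons_succ, List.getElem?_replicate]
        simp [show 0 < m + 1 + k - j - 1 by omega]
      rw [List.getElem?_eq_getElem hlt] at e
      have e2 := Option.some_inj.mp e
      rw [hgetc (j + 1) (by omega)] at e2
      rw [hcb] at e2
      simp at e2
    subst hjm2
    have hsrep : s = List.replicate k (!b) := by
      have e1 : (List.replicate (j + 1) c ++ s).drop j = c :: s := by
        rw [List.replicate_succ' , List.append_assoc]
        have := List.drop_length_add_append (l₁ := List.replicate j c) (l₂ := [c] ++ s) 0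
        rw [List.length_replicate] at this
        simpa using this
      have e2 := e1.symm.trans hdrop
      rw [show j + 1 + k - j - 1 = k by omega] at e2
      exact (List.cons.injEq _ _ _ _ ▸ e2).2
    have htk : (List.replicate (j + 1) c ++ s).take j = List.replicate j c := by
      rw [List.take_append_of_le_length (by simp), List.take_replicate]
      congr 1
      omega
    rw [htk, bval_replicate, hbv, hsrep, hcb]
    cases b
    · rw [show (!false) = true from rfl, g_replicate_true]
      first
      | (norm_num; push_cast; ring)
      | norm_num
    · rw [show (!true) = false from rfl, g_replicate_false]
      first
      | (norm_num; push_cast; ring)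
      | norm_num


/-- Structure theorem for hackenbush strings: (a) an all-blue string has value
its length (a positive integer), and removing the top counter (Blue's move)
decreases the value by 1; (b) symmetrically, an all-red string has value minus
its length, and Red's move on the top counter increases the value by 1; (c) a
bichromatic string has value `a/2^k` with `a` odd and `k ≥ 1`, removing Blue's
topmost blue counter together with everything above it decreases the value by
exactly `1/2^k`, and removing Red's topmost red counter together with
everything above it increases the value by exactly `1/2^k`. -/
theorem stmt12 (l : List Bool) (hne : l ≠ []) :
    ((∀ b ∈ l, b = true) →
      bval l = (l.length : ℚ) ∧ 0 < bval l ∧ bval l.dropLast = bval l - 1) ∧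
    ((∀ b ∈ l, b = false) →
      bval l = -(l.length : ℚ) ∧ bval l < 0 ∧ bval l.dropLast = bval l + 1) ∧
    ((true ∈ l) → (false ∈ l) →
      ∃ a : ℤ, ∃ k : ℕ, Odd a ∧ 1 ≤ k ∧ bval l = (a : ℚ) / 2 ^ k ∧
        (∀ j, j < l.length → l.getD j false = true →
          (∀ i, j < i → i < l.length → l.getD i true = false) →
          bval (l.take j) = bval l - 1 / 2 ^ k) ∧
        (∀ j, j < l.length → l.getD j true = false →
          (∀ i, j < i → i < l.length → l.getD i false = true) →
          bval (l.take j) = bval l + 1 / 2 ^ k)) := by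
  have hn1 : 1 ≤ l.length := List.length_pos_iff.mpr hne
  refine ⟨fun h => ?_, fun h => ?_, fun hT hF => ?_⟩
  · have hrep : l = List.replicate l.length true := List.eq_replicate_length.mpr h
    have h1 : bval l = (l.length : ℚ) := by
      conv_lhs => rw [hrep]
      rw [bval_replicate]; simp
    refine ⟨h1, by rw [h1]; exact_mod_cast hn1, ?_⟩
    conv_lhs => rw [hrep]
    rw [List.dropLast_replicate, bval_replicate, h1]
    simp
    rw [Nat.cast_sub hn1, Nat.cast_one]
  · have hrep : l = List.replicate l.length false := List.eq_replicate_length.mpr h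
    have h1 : bval l = -(l.length : ℚ) := by
      conv_lhs => rw [hrep]
      rw [bval_replicate]; simp
    refine ⟨h1, by rw [h1]; simp; exact_mod_cast hn1, ?_⟩
    conv_lhs => rw [hrep]
    rw [List.dropLast_replicate, bval_replicate, h1]
    simp
    rw [Nat.cast_sub hn1, Nat.cast_one]
    ring
  · obtain ⟨c, t, rfl⟩ : ∃ c t, l = c :: t := by
      cases l with
      | nil => exact absurd rfl hne
      | cons c t => exact ⟨c, t, rfl⟩
    obtain ⟨m, s, hl, hs⟩ := split_lead t c
    rw [hl] at hT hF ⊢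
    have hsne : s ≠ [] := by
      rintro rfl
      cases c <;> simp [List.mem_replicate] at hT hF
    obtain hh : s.head? = some (!c) := hs.resolve_left hsne
    set k := s.length with hkdef
    have hk1 : 1 ≤ k := List.length_pos_iff.mpr hsne
    obtain ⟨a0, ha0, hg0⟩ := g_odd s hsne
    have hbv := bval_decomp c s (m + 1) (by omega) (Or.inr hh)
    have hL : (List.replicate (m + 1) c ++ s).length = m + 1 + k := by simp [hkdef]
    have hek : Even ((2:ℤ) ^ k) := by
      rw [Int.even_pow]
      exact ⟨even_two, by omega⟩
    refine ⟨(if c then ((m:ℤ) + 1) else -((m:ℤ) + 1)) * 2 ^ k + a0, k,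
      (hek.mul_left _).add_odd ha0, hk1, ?_, ?_, ?_⟩
    · rw [hbv, hg0, ← hkdef]
      have h2k : (2:ℚ) ^ k ≠ 0 := by positivity
      cases c <;> push_cast <;> field_simp <;> ring
    · intro j hj hgd htail
      have hdrop := drop_eq _ true j hj (by simpa using hgd) (by simpa using htail)
      rw [hL] at hdrop
      have := move c true m k s hh hkdef.symm j (by rw [← hL]; exact hj) hdrop
      simpa using this
    · intro j hj hgd htail
      have hdrop := drop_eq _ false j hj (by simpa using hgd) (by simpa using htail)
      rw [hL] at hdrop
      have := move c false m k s hh hkdef.symm j (by rw [← hL]; exact hj) hdrop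
      rw [this]
      simp only [Bool.false_eq_true, if_false]
      ring
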